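/- If H Q_x H† ⪯ β · A Q_s A† (Loewner order) for PSD matrices, then log det(U(H Q_x H† + A Q_s A† ) U† + I) − log det(U A Q_s A† U†) ≤ log det((1+β)·U A Q_s A† U† + I) − log det(U A Q_s A† U†), and when U A Q_s A† U† ⪰ c·I with c > 0 this difference is at most n·log(1 + β + 1/c). -/

import Mathlib

open Matrix

lemma eig_ge {n : ℕ} {M : Matrix (Fin n) (Fin n) ℝ} (hM : M.IsHermitian) {c : ℝ}
    (h : (M - c • 1).PosSemidef) (i : Fin n) : c ≤ hM.eigenvalues i := by
  set v : Fin n → ℝ := ⇑(hM.eigenvectorBasis i) with hv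
  have hnorm : star v ⬝ᵥ v = 1 := by
    have h1 : ‖hM.eigenvectorBasis i‖ = 1 := hM.eigenvectorBasis.orthonormal.1 i
    have h2 : (inner ℝ (hM.eigenvectorBasis i) (hM.eigenvectorBasis i) : ℝ) = 1 := by
      rw [real_inner_self_eq_norm_mul_norm, h1]; ring
    rw [EuclideanSpace.inner_eq_star_dotProduct] at h2
    simpa using h2
  have h2 := h.dotProduct_mulVec_nonneg v
  rw [sub_mulVec, hM.mulVec_eigenvectorBasis i, smul_mulVec, one_mulVec,
    dotProduct_sub, dotProduct_smul, dotProduct_smul, hnorm] at h2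
  simp only [smul_eq_mul, mul_one] at h2
  linarith

lemma one_le_det_one_add {n : ℕ} {Q : Matrix (Fin n) (Fin n) ℝ} (hQ : Q.PosSemidef) :
    1 ≤ (1 + Q).det := by
  have h1 : (1 + Q).IsHermitian := (isHermitian_one).add hQ.1
  rw [h1.det_eq_prod_eigenvalues]
  have key : ∀ i, (1:ℝ) ≤ h1.eigenvalues i := fun i => eig_ge h1 (by simpa using hQ) i
  calc (1:ℝ) = ∏ _i : Fin n, 1 := by simp
  _ ≤ ∏ i, h1.eigenvalues i := Finset.prod_le_prod (by simp) (fun i _ => key i)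
  _ = _ := by norm_num

open scoped MatrixOrder in
lemma det_le_det_loewner {n : ℕ} {M N : Matrix (Fin n) (Fin n) ℝ} (hM : M.PosDef)
    (h : (N - M).PosSemidef) : M.det ≤ N.det := by
  set R := CFC.sqrt M with hR
  have hRps : R.PosSemidef := nonneg_iff_posSemidef.mp (CFC.sqrt_nonneg M)
  have hRR : R * R = M := by rw [hR]; exact CFC.sqrt_mul_sqrt_self M hM.posSemidef.nonneg
  have hdetR : 0 < R.det := by
    have h0 : 0 ≤ R.det := by
      rw [hRps.1.det_eq_prod_eigenvalues]
      exact Finset.prod_nonneg fun i _ => hRps.eigenvalues_nonneg i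
    have : R.det * R.det = M.det := by rw [← det_mul, hRR]
    nlinarith [hM.det_pos]
  have hRinv : IsUnit R.det := isUnit_iff_ne_zero.mpr (ne_of_gt hdetR)
  have hRiH : R⁻¹.IsHermitian := hRps.1.inv
  have hQ : (R⁻¹ * (N - M) * R⁻¹).PosSemidef := by
    have := h.mul_mul_conjTranspose_same R⁻¹
    rwa [hRiH.eq] at this
  have hNfact : N = R * (1 + R⁻¹ * (N - M) * R⁻¹) * R := by
    have e1 : R * (1 + R⁻¹ * (N - M) * R⁻¹) * R
        = R * R + (R * R⁻¹) * (N - M) * (R⁻¹ * R) := by noncomm_ring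
    rw [e1, mul_nonsing_inv _ hRinv, nonsing_inv_mul _ hRinv, one_mul, mul_one, hRR,
      add_sub_cancel]
  have hMdet : M.det = R.det * R.det := by rw [← det_mul, hRR]
  have hNdet : N.det = R.det * (1 + R⁻¹ * (N - M) * R⁻¹).det * R.det := by
    conv_lhs => rw [hNfact]
    rw [det_mul, det_mul]
  nlinarith [one_le_det_one_add hQ, hM.det_pos]

lemma det_smul_add_one {n : ℕ} {S : Matrix (Fin n) (Fin n) ℝ} (hSh : S.IsHermitian) (t : ℝ) :
    (t • S + 1).det = ∏ i, (t * hSh.eigenvalues i + 1) := by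
  set V := (hSh.eigenvectorUnitary : Matrix (Fin n) (Fin n) ℝ) with hV
  have hVV : V * star V = 1 := mem_unitaryGroup_iff.mp hSh.eigenvectorUnitary.2
  have hfact : t • S + 1
      = V * (diagonal (fun i => t * hSh.eigenvalues i + 1)) * star V := by
    have hdiag : (diagonal (fun i => t * hSh.eigenvalues i + 1) : Matrix (Fin n) (Fin n) ℝ)
        = t • diagonal (RCLike.ofReal ∘ hSh.eigenvalues) + 1 := by
      rw [← diagonal_one, ← diagonal_smul, ← diagonal_add]
      congr 1
    rw [hdiag, mul_add, add_mul, mul_one, hVV]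
    conv_lhs => rw [hSh.spectral_theorem, Unitary.conjStarAlgAut_apply]
    rw [Matrix.mul_smul, Matrix.smul_mul]
  have hdetV : V.det * (star V).det = 1 := by rw [← det_mul, hVV, det_one]
  rw [hfact, det_mul, det_mul, det_diagonal]
  calc V.det * (∏ i, (t * hSh.eigenvalues i + 1)) * (star V).det
      = (∏ i, (t * hSh.eigenvalues i + 1)) * (V.det * (star V).det) := by ring
  _ = _ := by rw [hdetV, mul_one]

/-- The key bounding step in the proof of Corollary 2: if
`H Qx Hᵀ ⪯ β · A Qs Aᵀ` in the Loewner order, then the interference term of the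
capacity bound is controlled, and when `U A Qs Aᵀ Uᵀ ⪰ c·I` it is at most
`n·log(1 + β + 1/c)`. -/
theorem interference_term_bounded (n Mt Mr Ms : ℕ)
    (H : Matrix (Fin Mr) (Fin Mt) ℝ) (Qx : Matrix (Fin Mt) (Fin Mt) ℝ)
    (A : Matrix (Fin Mr) (Fin Ms) ℝ) (Qs : Matrix (Fin Ms) (Fin Ms) ℝ)
    (U : Matrix (Fin n) (Fin Mr) ℝ) (β c : ℝ)
    (hQx : Qx.PosSemidef) (hQs : Qs.PosSemidef) (hβ : 0 ≤ β) (hc : 0 < c)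
    (hLoewner : (β • (A * Qs * Aᵀ) - H * Qx * Hᵀ).PosSemidef)
    (hS : (U * (A * Qs * Aᵀ) * Uᵀ - c • 1).PosSemidef) :
    (Real.log ((U * (H * Qx * Hᵀ + A * Qs * Aᵀ) * Uᵀ + 1).det)
        - Real.log ((U * (A * Qs * Aᵀ) * Uᵀ).det)
      ≤ Real.log (((1 + β) • (U * (A * Qs * Aᵀ) * Uᵀ) + 1).det)
        - Real.log ((U * (A * Qs * Aᵀ) * Uᵀ).det)) ∧
    (Real.log ((U * (H * Qx * Hᵀ + A * Qs * Aᵀ) * Uᵀ + 1).det)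
        - Real.log ((U * (A * Qs * Aᵀ) * Uᵀ).det)
      ≤ (n : ℝ) * Real.log (1 + β + 1 / c)) := by
  set S := U * (A * Qs * Aᵀ) * Uᵀ with hSdef
  set B := U * (H * Qx * Hᵀ) * Uᵀ with hBdef
  have hsplit : U * (H * Qx * Hᵀ + A * Qs * Aᵀ) * Uᵀ = B + S := by
    rw [hBdef, hSdef, Matrix.mul_add, Matrix.add_mul]
  have hAQ : (A * Qs * Aᵀ).PosSemidef := by
    rw [← conjTranspose_eq_transpose_of_trivial]
    exact hQs.mul_mul_conjTranspose_same A
  have hHQ : (H * Qx * Hᵀ).PosSemidef := by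
    rw [← conjTranspose_eq_transpose_of_trivial]
    exact hQx.mul_mul_conjTranspose_same H
  have hSpsd : S.PosSemidef := by
    rw [hSdef, ← conjTranspose_eq_transpose_of_trivial]
    exact hAQ.mul_mul_conjTranspose_same U
  have hBpsd : B.PosSemidef := by
    rw [hBdef, ← conjTranspose_eq_transpose_of_trivial]
    exact hHQ.mul_mul_conjTranspose_same U
  have hMpos : (B + S + 1).PosDef := Matrix.PosDef.posSemidef_add (hBpsd.add hSpsd) Matrix.PosDef.one
  have hdiffPSD : ((1 + β) • S + 1 - (B + S + 1)).PosSemidef := by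
    have e1 : (1 + β) • S + 1 - (B + S + 1) = U * (β • (A * Qs * Aᵀ) - H * Qx * Hᵀ) * Uᵀ := by
      rw [Matrix.mul_sub, Matrix.sub_mul, hSdef, hBdef, Matrix.mul_smul, Matrix.smul_mul]
      module
    rw [e1, ← conjTranspose_eq_transpose_of_trivial]
    exact hLoewner.mul_mul_conjTranspose_same U
  have hdet_le : (B + S + 1).det ≤ ((1 + β) • S + 1).det := det_le_det_loewner hMpos hdiffPSD
  have hlog_le : Real.log ((B + S + 1).det) ≤ Real.log (((1 + β) • S + 1).det) :=
    Real.log_le_log hMpos.det_pos hdet_le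
  have part1 : Real.log ((U * (H * Qx * Hᵀ + A * Qs * Aᵀ) * Uᵀ + 1).det) - Real.log (S.det)
      ≤ Real.log (((1 + β) • S + 1).det) - Real.log (S.det) := by
    rw [hsplit]; linarith
  refine ⟨part1, le_trans part1 ?_⟩
  -- eigenvalue bound
  have hSh : S.IsHermitian := hSpsd.1
  have hev : ∀ i, c ≤ hSh.eigenvalues i := fun i => eig_ge hSh hS i
  have hevpos : ∀ i, 0 < hSh.eigenvalues i := fun i => lt_of_lt_of_le hc (hev i)
  have h1β : (0:ℝ) < 1 + β := by linarith
  have htermpos : ∀ i, 0 < (1 + β) * hSh.eigenvalues i + 1 := fun i => by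
    have := hevpos i; positivity
  have hdetS : S.det = ∏ i, hSh.eigenvalues i := by
    rw [hSh.det_eq_prod_eigenvalues]; norm_num
  have hdetN : ((1 + β) • S + 1).det = ∏ i, ((1 + β) * hSh.eigenvalues i + 1) :=
    det_smul_add_one hSh (1 + β)
  rw [hdetS, hdetN,
    Real.log_prod (fun i _ => ne_of_gt (htermpos i)),
    Real.log_prod (fun i _ => ne_of_gt (hevpos i)),
    ← Finset.sum_sub_distrib]
  have hbound : ∀ i : Fin n,
      Real.log ((1 + β) * hSh.eigenvalues i + 1) - Real.log (hSh.eigenvalues i)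
        ≤ Real.log (1 + β + 1 / c) := by
    intro i
    have hlam := hevpos i
    rw [← Real.log_div (ne_of_gt (htermpos i)) (ne_of_gt hlam)]
    have e2 : ((1 + β) * hSh.eigenvalues i + 1) / hSh.eigenvalues i
        = 1 + β + 1 / hSh.eigenvalues i := by field_simp
    rw [e2]
    apply Real.log_le_log (by positivity)
    have : 1 / hSh.eigenvalues i ≤ 1 / c := one_div_le_one_div_of_le hc (hev i)
    linarith
  calc (∑ i, (Real.log ((1 + β) * hSh.eigenvalues i + 1) - Real.log (hSh.eigenvalues i)))
      ≤ ∑ _i : Fin n, Real.log (1 + β + 1 / c) :=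
        Finset.sum_le_sum (fun i _ => hbound i)
  _ = (n : ℝ) * Real.log (1 + β + 1 / c) := by
      rw [Finset.sum_const, Finset.card_univ, Fintype.card_fin, nsmul_eq_mul]
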